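/- In any metabelian Novikov algebra A, for all a,b,c,d,e in A, the element (a*((b*c)*d))*e equals 0. -/
import Mathlib


/-- Setting: a nonassociative (nonunital) algebra over a field of characteristic 0. -/
theorem stmt_5 {K : Type*} [Field K] [CharZero K]
    {A : Type*} [NonUnitalNonAssocRing A] [Module K A]
    [SMulCommClass K A A] [IsScalarTower K A A]
    (lcom : ∀ a b c : A, a*(b*c) = b*(a*c))
    (rsym : ∀ a b c : A, (a*b)*c - a*(b*c) = (a*c)*b - a*(c*b))
    (metab : ∀ a b c d : A, (a*b)*(c*d) = 0) :
    ∀ a b c d e : A, (a*((b*c)*d))*e = 0 := by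
  intro a b c d e
  have h1 := rsym a ((b*c)*d) e
  rw [lcom a ((b*c)*d) e, metab (b*c) d a e, metab a e (b*c) d,
      lcom e (b*c) d, metab b c e d, mul_zero] at h1
  simpa using h1
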